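/- Let λ_1, …, λ_r be positive integers and k ≥ 1. Let T = ∏_{i=1}^r Perm(Fin λ_i), and for g = (g_1,…,g_r) ∈ T set α_k(g) = ∑_{i=1}^r α_k(g_i) and α(g) = ∑_{i=1}^r α(g_i). Then ∑_{g∈T} α_k(g)·2^{α(g)} = 2·(k−1)! · ∑_{i : λ_i ≥ k} C(λ_i,k) · (λ_i−k+1)! · ∏_{j≠i} (λ_j+1)!. -/

import Mathlib

open Equiv Equiv.Perm Finset
set_option linter.unusedSectionVars false
set_option maxHeartbeats 1000000

section Aux
variable {α : Type*} [Fintype α] [DecidableEq α]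

def fixc (σ : Equiv.Perm α) : ℕ := (Finset.univ.filter fun x => σ x = x).card

def ctot (σ : Equiv.Perm α) : ℕ := Multiset.card σ.cycleType + fixc σ

theorem inv_pow_apply {σ : Perm α} {f : α → Bool} (hf : ∀ x, f (σ x) = f x) (n : ℕ) (x : α) :
    f ((σ ^ n) x) = f x := by
  induction n with
  | zero => simp
  | succ n ih => rw [pow_succ', Perm.mul_apply, hf, ih]

theorem inv_sameCycle {σ : Perm α} {f : α → Bool} (hf : ∀ x, f (σ x) = f x) {x y : α}
    (h : σ.SameCycle x y) : f x = f y := by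
  obtain ⟨n, rfl⟩ := h
  have hinv : ∀ z, f (σ⁻¹ z) = f z := fun z => by
    conv_rhs => rw [← Equiv.apply_symm_apply σ z]
    rw [← hf (σ⁻¹ z)]; rfl
  rcases n with n | n
  · rw [Int.ofNat_eq_coe, zpow_natCast, inv_pow_apply hf]
  · rw [zpow_negSucc, ← inv_pow, inv_pow_apply hinv]

noncomputable def csupRep (σ : Perm α) (c : ↥σ.cycleFactorsFinset) : α :=
  (show c.1.support.Nonempty from
    Finset.nonempty_iff_ne_empty.2 (fun h => (mem_cycleFactorsFinset_iff.1 c.2).1.ne_one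
      (support_eq_empty_iff.1 h))).choose

theorem csupRep_mem (σ : Perm α) (c : ↥σ.cycleFactorsFinset) : csupRep σ c ∈ c.1.support :=
  Exists.choose_spec _

noncomputable def colEquiv (σ : Perm α) :
    {f : α → Bool // ∀ x, f (σ x) = f x} ≃
      ((↥σ.cycleFactorsFinset ⊕ {x : α // σ x = x}) → Bool) where
  toFun f := Sum.elim (fun c => f.1 (csupRep σ c)) (fun x => f.1 x.1)
  invFun g := ⟨fun x => if h : σ x = x then g (Sum.inr ⟨x, h⟩)
      else g (Sum.inl ⟨σ.cycleOf x, cycleOf_mem_cycleFactorsFinset_iff.2 (mem_support.2 h)⟩),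
    by
      intro x
      by_cases h : σ x = x
      · simp only [h, dif_pos]
      · have h2 : σ (σ x) ≠ σ x := fun hc => h (σ.injective hc)
        simp only [dif_neg h, dif_neg h2]
        congr 1
        exact congrArg Sum.inl (Subtype.ext (cycleOf_self_apply σ x))⟩
  left_inv := by
    intro f
    apply Subtype.ext
    funext x
    by_cases h : σ x = x
    · simp only [h, dif_pos, Sum.elim_inr]
    · simp only [dif_neg h, Sum.elim_inl]
      set c : ↥σ.cycleFactorsFinset :=
        ⟨σ.cycleOf x, cycleOf_mem_cycleFactorsFinset_iff.2 (mem_support.2 h)⟩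
      have hy : csupRep σ c ∈ (σ.cycleOf x).support := csupRep_mem σ c
      exact (inv_sameCycle f.2 (mem_support_cycleOf_iff.1 hy).1).symm
  right_inv := by
    intro g
    funext z
    rcases z with c | x
    · simp only [Sum.elim_inl]
      have hy : csupRep σ c ∈ c.1.support := csupRep_mem σ c
      have h : ¬ σ (csupRep σ c) = csupRep σ c :=
        mem_support.1 (mem_cycleFactorsFinset_support_le c.2 hy)
      simp only [dif_neg h]
      congr 1
      exact congrArg Sum.inl (Subtype.ext (cycle_is_cycleOf hy c.2).symm)
    · simp only [Sum.elim_inr, dif_pos x.2]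

theorem card_invCol (σ : Perm α) :
    Fintype.card {f : α → Bool // ∀ x, f (σ x) = f x} = 2 ^ ctot σ := by
  rw [Fintype.card_congr (colEquiv σ), Fintype.card_fun, Fintype.card_sum, Fintype.card_coe,
    Fintype.card_subtype, Fintype.card_bool, ctot, fixc]
  congr 1
  rw [cycleType_def, Multiset.card_map]
  rfl

def stabEquiv (f : α → Bool) :
    {σ : Perm α // ∀ x, f (σ x) = f x} ≃
      Perm {x // f x = true} × Perm {x // f x = false} where
  toFun σ := (σ.1.subtypePerm (fun x => by rw [σ.2 x]),
              σ.1.subtypePerm (fun x => by rw [σ.2 x]))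
  invFun τ := ⟨ofSubtype τ.1 * ofSubtype τ.2, by
    intro x
    rcases hx : f x with _ | _
    · have h1 : ofSubtype τ.2 x = (τ.2 ⟨x, hx⟩ : _) := ofSubtype_apply_of_mem τ.2 hx
      have h2 : f (ofSubtype τ.2 x) = false := by rw [h1]; exact (τ.2 ⟨x, hx⟩).2
      rw [Perm.mul_apply, ofSubtype_apply_of_not_mem τ.1 (by simp [h2])]
      simp [h2, hx]
    · have h1 : ofSubtype τ.2 x = x := ofSubtype_apply_of_not_mem τ.2 (by simp [hx])
      rw [Perm.mul_apply, h1, ofSubtype_apply_of_mem τ.1 hx]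
      exact (τ.1 ⟨x, hx⟩).2⟩
  left_inv := by
    intro σ
    have h₁ : ∀ y : α, (f y = true) ↔ (f (σ.1 y) = true) := fun y => by rw [σ.2 y]
    have h₂ : ∀ y : α, (f y = false) ↔ (f (σ.1 y) = false) := fun y => by rw [σ.2 y]
    apply Subtype.ext
    apply Equiv.ext
    intro x
    show (ofSubtype (σ.1.subtypePerm (p := fun y => f y = true) (fun y => (h₁ y).symm)) * ofSubtype (σ.1.subtypePerm (p := fun y => f y = false) (fun y => (h₂ y).symm))) x = σ.1 x
    rw [Perm.mul_apply]
    rcases hx : f x with _ | _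
    · rw [ofSubtype_subtypePerm_of_mem (p := fun y => f y = false) (fun y => (h₂ y).symm) hx,
        ofSubtype_apply_of_not_mem _ (by simp [(h₂ x).1 hx])]
    · rw [ofSubtype_apply_of_not_mem ((σ.1).subtypePerm (p := fun y => f y = false) (fun y => (h₂ y).symm)) (show ¬ f x = false by simp [hx]),
        ofSubtype_subtypePerm_of_mem (p := fun y => f y = true) (fun y => (h₁ y).symm) hx]
  right_inv := by
    intro τ
    have key1 : ∀ x : {x // f x = true}, (ofSubtype τ.1 * ofSubtype τ.2) (x : α) = (τ.1 x : α) := by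
      intro x
      rw [Perm.mul_apply, ofSubtype_apply_of_not_mem τ.2 (by simp [x.2]),
        ofSubtype_apply_of_mem τ.1 x.2]
    have key2 : ∀ x : {x // f x = false}, (ofSubtype τ.1 * ofSubtype τ.2) (x : α) = (τ.2 x : α) := by
      intro x
      rw [Perm.mul_apply, ofSubtype_apply_of_mem τ.2 x.2,
        ofSubtype_apply_of_not_mem τ.1 (by simp [(τ.2 x).2])]
    refine Prod.ext (Equiv.ext fun x => Subtype.ext ?_) (Equiv.ext fun x => Subtype.ext ?_)
    · rw [← key1 x]; rfl
    · rw [← key2 x]; rfl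

theorem card_stab (f : α → Bool) :
    Fintype.card {σ : Perm α // ∀ x, f (σ x) = f x} =
      (Fintype.card {x // f x = true}).factorial *
        (Fintype.card {x // f x = false}).factorial := by
  rw [Fintype.card_congr (stabEquiv f), Fintype.card_prod, Fintype.card_perm, Fintype.card_perm]

def fsEquiv : Finset α ≃ (α → Bool) where
  toFun s x := x ∈ s
  invFun f := Finset.univ.filter fun x => f x = true
  left_inv s := by ext x; simp
  right_inv f := by funext x; rcases h : f x with _ | _ <;> simp [h]

theorem sumPow : ∑ σ : Perm α, 2 ^ ctot σ = (Fintype.card α + 1).factorial := by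
  have key : ∀ σ : Perm α, (2 : ℕ) ^ ctot σ =
      ∑ f : α → Bool, if (∀ x, f (σ x) = f x) then 1 else 0 := by
    intro σ
    rw [← card_invCol σ, Fintype.card_subtype, Finset.card_filter]
  simp_rw [key]
  rw [Finset.sum_comm]
  have key2 : ∀ f : α → Bool, (∑ σ : Perm α, if (∀ x, f (σ x) = f x) then 1 else 0) =
      (Fintype.card {x // f x = true}).factorial *
        (Fintype.card {x // f x = false}).factorial := by
    intro f
    rw [← card_stab f, Fintype.card_subtype, Finset.card_filter]
  simp_rw [key2]
  rw [← Equiv.sum_comp (fsEquiv (α := α))]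
  have key3 : ∀ s : Finset α,
      (Fintype.card {x // fsEquiv s x = true}).factorial *
        (Fintype.card {x // fsEquiv s x = false}).factorial
      = s.card.factorial * (Fintype.card α - s.card).factorial := by
    intro s
    congr 2
    · rw [Fintype.card_subtype]
      congr 1
      ext x
      simp [fsEquiv]
    · rw [Fintype.card_subtype]
      have h2 : Finset.univ.filter (fun x => fsEquiv s x = false) = sᶜ := by
        ext x; simp [fsEquiv]
      rw [h2, Finset.card_compl]
  simp_rw [key3]
  rw [← Finset.powerset_univ, Finset.sum_powerset, Finset.card_univ]
  have key4 : ∀ j ∈ Finset.range (Fintype.card α + 1),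
      (∑ t ∈ Finset.powersetCard j (Finset.univ : Finset α),
        ((t.card).factorial * (Fintype.card α - t.card).factorial))
      = (Fintype.card α).factorial := by
    intro j hj
    rw [Finset.sum_powersetCard j (Finset.univ : Finset α)
      (fun n => n.factorial * (Fintype.card α - n).factorial), Finset.card_univ, smul_eq_mul,
      ← mul_assoc, Nat.choose_mul_factorial_mul_factorial (Nat.lt_succ_iff.1 (Finset.mem_range.1 hj))]
  rw [Finset.sum_congr rfl key4, Finset.sum_const, Finset.card_range, smul_eq_mul,
    Nat.factorial_succ]

theorem cycle_count {k : ℕ} (hk : 2 ≤ k) :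
    (Finset.univ.filter fun c : Perm α => c.cycleType = {k}).card * k
      = (Fintype.card α).descFactorial k := by
  have h0 : 0 < k := by omega
  have hmem : ∀ e : Fin k ↪ α, (List.ofFn ⇑e).formPerm.cycleType = {k} := by
    intro e
    have hnd : (List.ofFn ⇑e).Nodup := List.nodup_ofFn.2 e.injective
    have hlen : (List.ofFn ⇑e).length = k := List.length_ofFn
    have hlen2 : 2 ≤ (List.ofFn ⇑e).length := by rw [hlen]; exact hk
    rw [(List.isCycle_formPerm hnd hlen2).cycleType,
      List.support_formPerm_of_nodup _ hnd (fun x hx => by rw [hx] at hlen; simp at hlen; omega),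
      List.toFinset_card_of_nodup hnd, hlen]
  have fib : ∀ c ∈ (Finset.univ.filter fun c : Perm α => c.cycleType = {k}),
      (Finset.univ.filter fun e : Fin k ↪ α => (List.ofFn ⇑e).formPerm = c).card = k := by
    intro c hcmem
    have hc : c.cycleType = {k} := (Finset.mem_filter.1 hcmem).2
    have hcyc : c.IsCycle := card_cycleType_eq_one.1 (by rw [hc]; rfl)
    have hcard : c.support.card = k := by rw [← sum_cycleType, hc]; simp
    have key : (Finset.univ.filter fun e : Fin k ↪ α => (List.ofFn ⇑e).formPerm = c).card
        = c.support.card := by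
      apply Finset.card_bij' (i := fun (e : Fin k ↪ α)
          (_ : e ∈ Finset.univ.filter fun e : Fin k ↪ α => (List.ofFn ⇑e).formPerm = c) => e ⟨0, h0⟩)
        (j := fun (x : α) (hx : x ∈ c.support) =>
          ⟨fun i => (c.toList x).get ⟨i.1, by
              rw [Perm.length_toList, hcyc.cycleOf_eq (mem_support.1 hx), hcard]; exact i.2⟩,
            fun i j hij => by
              have := (List.Nodup.get_inj_iff (Equiv.Perm.nodup_toList c x)).1 hij
              apply Fin.ext
              simpa using congrArg Fin.val this⟩)
      case hi =>
        intro e he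
        have he' : (List.ofFn ⇑e).formPerm = c := (Finset.mem_filter.1 he).2
        rw [← he', List.support_formPerm_of_nodup _ (List.nodup_ofFn.2 e.injective)
          (fun x hx => by have := List.length_ofFn (f := ⇑e); rw [hx] at this; simp at this; omega)]
        simp only [List.mem_toFinset, List.mem_ofFn]
        exact ⟨⟨0, h0⟩, rfl⟩
      case hj =>
        intro x hx
        refine Finset.mem_filter.2 ⟨Finset.mem_univ _, ?_⟩
        have hLT : (c.toList x).length = k := by
          rw [Perm.length_toList, hcyc.cycleOf_eq (mem_support.1 hx), hcard]
        have heq : (List.ofFn fun i : Fin k => (c.toList x).get ⟨i.1, by rw [hLT]; exact i.2⟩)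
            = c.toList x := by
          apply List.ext_get
          · simp [hLT]
          · intro n h1 h2
            simp [List.get_ofFn]
        change (List.ofFn fun i : Fin k => (c.toList x).get ⟨i.1, by rw [hLT]; exact i.2⟩).formPerm = c
        rw [heq, Equiv.Perm.formPerm_toList, hcyc.cycleOf_eq (mem_support.1 hx)]
      case left_inv =>
        intro e he
        have he' : (List.ofFn ⇑e).formPerm = c := (Finset.mem_filter.1 he).2
        apply DFunLike.ext
        intro i
        have hnd : (List.ofFn ⇑e).Nodup := List.nodup_ofFn.2 e.injective
        have hlen : (List.ofFn ⇑e).length = k := List.length_ofFn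
        show (c.toList (e ⟨0, h0⟩)).get _ = e i
        rw [List.get_eq_getElem, Equiv.Perm.getElem_toList, Fin.val_mk, ← he']
        have h2 : e ⟨0, h0⟩ = (List.ofFn ⇑e).get ⟨0, by rw [hlen]; exact h0⟩ := by
          simp [List.get_ofFn]
        rw [h2, List.get_eq_getElem, List.formPerm_pow_apply_getElem _ hnd i.1 0 (by rw [hlen]; exact h0)]
        simp [List.get_ofFn, hlen, Nat.mod_eq_of_lt i.2]
      case right_inv =>
        intro x hx
        exact Equiv.Perm.toList_getElem_zero c x hx
    exact key.trans hcard
  have main : (Finset.univ : Finset (Fin k ↪ α)).card =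
      (Finset.univ.filter fun c : Perm α => c.cycleType = {k}).card * k := by
    rw [Finset.card_eq_sum_card_fiberwise (f := fun e : Fin k ↪ α => (List.ofFn ⇑e).formPerm)
      (t := Finset.univ.filter fun c : Perm α => c.cycleType = {k})
      (fun e _ => Finset.mem_filter.2 ⟨Finset.mem_univ _, hmem e⟩),
      Finset.sum_congr rfl fib, Finset.sum_const, smul_eq_mul]
  calc (Finset.univ.filter fun c : Perm α => c.cycleType = {k}).card * k
      = (Finset.univ : Finset (Fin k ↪ α)).card := main.symm
    _ = Fintype.card (Fin k ↪ α) := by rw [Finset.card_univ]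
    _ = (Fintype.card α).descFactorial (Fintype.card (Fin k)) := Fintype.card_embedding_eq
    _ = (Fintype.card α).descFactorial k := by rw [Fintype.card_fin]

theorem disjoint_ofSubtype (c : Perm α) (ρ : Perm {x // x ∉ c.support}) :
    c.Disjoint (ofSubtype ρ) := by
  intro x
  by_cases h : x ∈ c.support
  · right; exact ofSubtype_apply_of_not_mem ρ (by simpa using h)
  · left; exact notMem_support.1 h

theorem mem_supp_iff_of_disjoint {τ c : Perm α} (hd : τ.Disjoint c) (x : α) :
    τ x ∈ c.support ↔ x ∈ c.support := by
  by_cases h : τ x = x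
  · rw [h]
  · have hx : x ∈ τ.support := mem_support.2 h
    have h1 : x ∉ c.support := Finset.disjoint_left.1 hd.disjoint_support hx
    have h2 : τ x ∉ c.support :=
      Finset.disjoint_left.1 hd.disjoint_support (apply_mem_support.2 hx)
    simp [h1, h2]

theorem fix_filter_eq (c : Perm α) (ρ : Perm {x // x ∉ c.support}) :
    (Finset.univ.filter fun x : α => (c * ofSubtype ρ) x = x)
      = (Finset.univ.filter fun y : {x // x ∉ c.support} => ρ y = y).image Subtype.val := by
  ext x
  simp only [Finset.mem_filter, Finset.mem_univ, true_and, Finset.mem_image]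
  constructor
  · intro h
    by_cases hx : x ∈ c.support
    · exfalso
      have h1 : ofSubtype ρ x = x := ofSubtype_apply_of_not_mem ρ (by simpa using hx)
      rw [Perm.mul_apply, h1] at h
      exact mem_support.1 hx h
    · have h1 : ofSubtype ρ x = (ρ ⟨x, hx⟩ : _) := ofSubtype_apply_of_mem ρ hx
      have h2 : (ρ ⟨x, hx⟩ : α) ∉ c.support := (ρ ⟨x, hx⟩).2
      rw [Perm.mul_apply, h1] at h
      have h3 : c ((ρ ⟨x, hx⟩ : α)) = (ρ ⟨x, hx⟩ : α) := notMem_support.1 h2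
      rw [h3] at h
      exact ⟨⟨x, hx⟩, Subtype.ext h, rfl⟩
  · rintro ⟨y, hy, rfl⟩
    have h1 : ofSubtype ρ (y : α) = (ρ y : α) := ofSubtype_apply_of_mem ρ y.2
    rw [Perm.mul_apply, h1, hy, notMem_support.1 y.2]

theorem ctot_cycle_mul (c : Perm α) (hc : c.IsCycle) (ρ : Perm {x // x ∉ c.support}) :
    ctot (c * ofSubtype ρ) = ctot ρ + 1 := by
  have hd := disjoint_ofSubtype c ρ
  rw [ctot, ctot, hd.cycleType_mul, hc.cycleType, cycleType_ofSubtype, fixc, fix_filter_eq c ρ,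
    Finset.card_image_of_injective _ Subtype.val_injective]
  simp [fixc]
  ring

theorem sum_cycle_fiber (c : Perm α) (hc : c.IsCycle) :
    ∑ π ∈ Finset.univ.filter (fun π : Perm α => c ∈ π.cycleFactorsFinset), 2 ^ ctot π
      = 2 * (Fintype.card {x // x ∉ c.support} + 1).factorial := by
  have hiff : ∀ (π : Perm α), c ∈ π.cycleFactorsFinset →
      ∀ x : α, (π * c⁻¹) x ∉ c.support ↔ x ∉ c.support := by
    intro π hπ x
    have hd := disjoint_mul_inv_of_mem_cycleFactorsFinset hπ
    rw [mem_supp_iff_of_disjoint hd x]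
  have hji : ∀ (π : Perm α) (hπ : c ∈ π.cycleFactorsFinset),
      c * ofSubtype ((π * c⁻¹).subtypePerm (p := fun x => x ∉ c.support) (hiff π hπ)) = π := by
    intro π hπ
    have hd := disjoint_mul_inv_of_mem_cycleFactorsFinset hπ
    rw [ofSubtype_subtypePerm _ (fun x hx => by
      intro hmem
      exact ((hd x).resolve_left hx) |> fun h => (mem_support.1 hmem) h)]
    rw [← hd.commute.eq, mul_assoc, inv_mul_cancel, mul_one]
  rw [Finset.sum_bij' (i := fun π (hπ : π ∈ Finset.univ.filter
        (fun π : Perm α => c ∈ π.cycleFactorsFinset)) =>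
        (π * c⁻¹).subtypePerm (p := fun x => x ∉ c.support) (hiff π ((Finset.mem_filter.1 hπ).2)))
      (j := fun (ρ : Perm {x // x ∉ c.support}) _ => c * ofSubtype ρ)
      (t := Finset.univ)
      (g := fun ρ => 2 ^ (ctot ρ + 1))]
  · simp_rw [pow_succ]
    rw [← Finset.sum_mul, sumPow, mul_comm]
  · intro π hπ; exact Finset.mem_univ _
  · intro ρ _
    refine Finset.mem_filter.2 ⟨Finset.mem_univ _, mem_cycleFactorsFinset_iff.2 ⟨hc, ?_⟩⟩
    intro a ha
    rw [Perm.mul_apply, ofSubtype_apply_of_not_mem ρ (by simpa using ha)]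
  · intro π hπ
    exact hji π ((Finset.mem_filter.1 hπ).2)
  · intro ρ _
    apply Equiv.ext
    intro y
    apply Subtype.ext
    show ((c * ofSubtype ρ) * c⁻¹) (y : α) = (ρ y : α)
    rw [(disjoint_ofSubtype c ρ).commute.eq, mul_assoc, mul_inv_cancel, mul_one,
      ofSubtype_apply_of_mem ρ y.2]
  · intro π hπ
    conv_lhs => rw [← hji π ((Finset.mem_filter.1 hπ).2)]
    rw [ctot_cycle_mul c hc]

theorem fix_filter_eq' (x₀ : α) (ρ : Perm {x // ¬ x = x₀}) :
    (Finset.univ.filter fun x : α => ofSubtype ρ x = x)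
      = insert x₀ ((Finset.univ.filter fun y : {x // ¬ x = x₀} => ρ y = y).image Subtype.val) := by
  ext x
  simp only [Finset.mem_filter, Finset.mem_univ, true_and, Finset.mem_insert, Finset.mem_image]
  constructor
  · intro h
    by_cases hx : x = x₀
    · left; exact hx
    · right
      refine ⟨⟨x, hx⟩, Subtype.ext ?_, rfl⟩
      rw [← ofSubtype_apply_of_mem ρ hx, h]
  · rintro (rfl | ⟨y, hy, rfl⟩)
    · exact ofSubtype_apply_of_not_mem ρ (by simp)
    · rw [ofSubtype_apply_of_mem ρ y.2, hy]

theorem ctot_ofSubtype_fix (x₀ : α) (ρ : Perm {x // ¬ x = x₀}) :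
    ctot (ofSubtype ρ) = ctot ρ + 1 := by
  rw [ctot, ctot, cycleType_ofSubtype, fixc, fixc, fix_filter_eq' x₀ ρ,
    Finset.card_insert_of_notMem (by simp),
    Finset.card_image_of_injective _ Subtype.val_injective]
  ring

theorem sum_fix_fiber (x₀ : α) :
    ∑ π ∈ Finset.univ.filter (fun π : Perm α => π x₀ = x₀), 2 ^ ctot π
      = 2 * (Fintype.card {x // ¬ x = x₀} + 1).factorial := by
  have hiff : ∀ (π : Perm α), π x₀ = x₀ → ∀ x : α, ¬ π x = x₀ ↔ ¬ x = x₀ := by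
    intro π hπ x
    constructor
    · intro h he
      exact h (by rw [he, hπ])
    · intro h he
      exact h (π.injective (he.trans hπ.symm))
  have hji : ∀ (π : Perm α) (hπ : π x₀ = x₀),
      ofSubtype (π.subtypePerm (p := fun x => ¬ x = x₀) (hiff π hπ)) = π := by
    intro π hπ
    exact ofSubtype_subtypePerm _ (fun x hx => by
      intro he
      exact hx (by rw [he, hπ]))
  rw [Finset.sum_bij' (i := fun π (hπ : π ∈ Finset.univ.filter (fun π : Perm α => π x₀ = x₀)) =>
        π.subtypePerm (p := fun x => ¬ x = x₀) (hiff π ((Finset.mem_filter.1 hπ).2)))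
      (j := fun (ρ : Perm {x // ¬ x = x₀}) _ => ofSubtype ρ)
      (t := Finset.univ)
      (g := fun ρ => 2 ^ (ctot ρ + 1))]
  · simp_rw [pow_succ]
    rw [← Finset.sum_mul, sumPow, mul_comm]
  · intro π hπ; exact Finset.mem_univ _
  · intro ρ _
    exact Finset.mem_filter.2 ⟨Finset.mem_univ _, ofSubtype_apply_of_not_mem ρ (by simp)⟩
  · intro π hπ
    exact hji π ((Finset.mem_filter.1 hπ).2)
  · intro ρ _
    apply Equiv.ext
    intro y
    apply Subtype.ext
    show ofSubtype ρ (y : α) = (ρ y : α)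
    rw [ofSubtype_apply_of_mem ρ y.2]
  · intro π hπ
    conv_lhs => rw [← hji π ((Finset.mem_filter.1 hπ).2)]
    rw [ctot_ofSubtype_fix x₀]

def ccnt (k : ℕ) (σ : Equiv.Perm α) : ℕ :=
  if k = 1 then fixc σ else Multiset.count k σ.cycleType

theorem single_sum (k : ℕ) (hk : 1 ≤ k) :
    ∑ π : Perm α, ccnt k π * 2 ^ ctot π
      = 2 * (k-1).factorial *
          ((Fintype.card α).choose k * (Fintype.card α - k + 1).factorial) := by
  rcases eq_or_lt_of_le hk with h1 | h2
  · -- k = 1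
    subst h1
    have step1 : ∀ π : Perm α, ccnt 1 π * 2 ^ ctot π
        = ∑ x : α, if π x = x then 2 ^ ctot π else 0 := by
      intro π
      rw [ccnt, if_pos rfl, fixc, Finset.card_filter, Finset.sum_mul]
      simp [ite_mul]
    simp_rw [step1]
    rw [Finset.sum_comm]
    have step2 : ∀ x : α, (∑ π : Perm α, if π x = x then 2 ^ ctot π else 0)
        = 2 * ((Fintype.card α - 1) + 1).factorial := by
      intro x
      rw [← Finset.sum_filter, sum_fix_fiber x]
      congr 3
      rw [Fintype.card_subtype_compl, Fintype.card_subtype_eq]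
    simp_rw [step2]
    rw [Finset.sum_const, Finset.card_univ, smul_eq_mul]
    simp [Nat.choose_one_right]
    ring
  · -- 2 ≤ k
    have hk2 : 2 ≤ k := h2
    have hkne : ¬ k = 1 := by omega
    have step1 : ∀ π : Perm α, ccnt k π * 2 ^ ctot π
        = ∑ c : Perm α,
            if (c ∈ π.cycleFactorsFinset ∧ k = c.support.card) then 2 ^ ctot π else 0 := by
      intro π
      have e0 : Multiset.count k π.cycleType
          = (π.cycleFactorsFinset.filter (fun c => k = c.support.card)).card := by
        rw [cycleType_def, Multiset.count_map]
        rfl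
      have e1 : π.cycleFactorsFinset.filter (fun c => k = c.support.card)
          = Finset.univ.filter (fun c => c ∈ π.cycleFactorsFinset ∧ k = c.support.card) := by
        ext c; simp [Finset.mem_filter]
      rw [ccnt, if_neg hkne, e0, e1, Finset.card_filter, Finset.sum_mul]
      simp [ite_mul]
    simp_rw [step1]
    rw [Finset.sum_comm]
    have step2 : ∀ c : Perm α,
        (∑ π : Perm α, if (c ∈ π.cycleFactorsFinset ∧ k = c.support.card)
            then 2 ^ ctot π else 0)
        = if c.cycleType = {k} then 2 * ((Fintype.card α - k) + 1).factorial else 0 := by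
      intro c
      by_cases hc : c.cycleType = {k}
      · have hcyc : c.IsCycle := card_cycleType_eq_one.1 (by rw [hc]; rfl)
        have hcard : c.support.card = k := by rw [← sum_cycleType, hc]; simp
        rw [if_pos hc]
        have hiff : ∀ π : Perm α,
            (c ∈ π.cycleFactorsFinset ∧ k = c.support.card) ↔ c ∈ π.cycleFactorsFinset :=
          fun π => by simp [hcard]
        simp_rw [hiff]
        rw [← Finset.sum_filter, sum_cycle_fiber c hcyc]
        congr 3
        rw [Fintype.card_subtype_compl, Fintype.card_coe, hcard]
      · rw [if_neg hc]
        apply Finset.sum_eq_zero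
        intro π _
        rw [if_neg]
        rintro ⟨hmem, hkc⟩
        exact hc (by rw [(mem_cycleFactorsFinset_iff.1 hmem).1.cycleType, ← hkc])
    simp_rw [step2]
    rw [← Finset.sum_filter, Finset.sum_const, smul_eq_mul]
    have hA : (Finset.univ.filter fun c : Perm α => c.cycleType = {k}).card
        = (k-1).factorial * (Fintype.card α).choose k := by
      have h := cycle_count (α := α) hk2
      have hfact : (Fintype.card α).descFactorial k
          = ((k-1).factorial * (Fintype.card α).choose k) * k := by
        rw [Nat.descFactorial_eq_factorial_mul_choose]
        have hkk : k.factorial = k * (k-1).factorial := by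
          conv_lhs => rw [show k = (k-1)+1 by omega]
          rw [Nat.factorial_succ, show k - 1 + 1 = k by omega]
        rw [hkk]; ring
      exact Nat.eq_of_mul_eq_mul_right (by omega) (h.trans hfact)
    rw [hA]
    ring

end Aux

/-- `αₖ(π)`: the number of cycles of length `k` of the permutation `π`
(fixed points count as cycles of length 1). -/
def cycCount {m : ℕ} (k : ℕ) (π : Equiv.Perm (Fin m)) : ℕ :=
  if k = 1 then (Finset.univ.filter fun x => π x = x).card
  else Multiset.count k π.cycleType

/-- `α(π)`: the total number of cycles of `π` (fixed points included). -/
def cycTotal {m : ℕ} (π : Equiv.Perm (Fin m)) : ℕ :=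
  Multiset.card π.cycleType + (Finset.univ.filter fun x => π x = x).card

theorem sum_product_cycCount_two_pow (r : ℕ) (lam : Fin r → ℕ) (hpos : ∀ i, 1 ≤ lam i)
    (k : ℕ) (hk : 1 ≤ k) :
    ∑ g : (∀ i : Fin r, Equiv.Perm (Fin (lam i))),
        (∑ i, cycCount k (g i)) * 2 ^ (∑ i, cycTotal (g i)) =
      2 * (k - 1).factorial *
        ∑ i ∈ Finset.univ.filter (fun i : Fin r => k ≤ lam i),
          (lam i).choose k * (lam i - k + 1).factorial *
            ∏ j ∈ Finset.univ.erase i, (lam j + 1).factorial := by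
  have key : ∀ g : (∀ i : Fin r, Equiv.Perm (Fin (lam i))),
      (∑ i, cycCount k (g i)) * 2 ^ (∑ i, cycTotal (g i))
        = ∑ i : Fin r, ∏ j : Fin r, ((if j = i then ccnt k (g j) else 1) * 2 ^ ctot (g j)) := by
    intro g
    rw [Finset.sum_mul]
    apply Finset.sum_congr rfl
    intro i _
    rw [Finset.prod_mul_distrib, Finset.prod_ite_eq', if_pos (Finset.mem_univ i),
      Finset.prod_pow_eq_pow_sum]
    rfl
  simp_rw [key]
  rw [Finset.sum_comm]
  have inner : ∀ i : Fin r,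
      (∑ g : (∀ i : Fin r, Equiv.Perm (Fin (lam i))),
        ∏ j : Fin r, ((if j = i then ccnt k (g j) else 1) * 2 ^ ctot (g j)))
      = (2 * (k-1).factorial * ((lam i).choose k * (lam i - k + 1).factorial)) *
          ∏ j ∈ Finset.univ.erase i, (lam j + 1).factorial := by
    intro i
    have hswap := Finset.prod_univ_sum
      (fun j : Fin r => (Finset.univ : Finset (Equiv.Perm (Fin (lam j)))))
      (fun j σ => (if j = i then ccnt k σ else 1) * 2 ^ ctot σ)
    rw [← Fintype.piFinset_univ, ← hswap]
    rw [← Finset.mul_prod_erase Finset.univ _ (Finset.mem_univ i)]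
    congr 1
    · simp only [if_pos trivial]
      rw [single_sum k hk, Fintype.card_fin]
    · apply Finset.prod_congr rfl
      intro j hj
      have hne : j ≠ i := (Finset.mem_erase.1 hj).1
      simp only [if_neg hne, one_mul]
      rw [sumPow, Fintype.card_fin]
  simp_rw [inner]
  rw [← Finset.sum_subset (Finset.subset_univ
    (Finset.univ.filter (fun i : Fin r => k ≤ lam i)))]
  · rw [Finset.mul_sum]
    apply Finset.sum_congr rfl
    intro i _
    ring
  · intro i _ hi
    have : lam i < k := by
      simp only [Finset.mem_filter, Finset.mem_univ, true_and, not_le] at hi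
      exact hi
    rw [Nat.choose_eq_zero_of_lt this]
    ring
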